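/- Let P₀₀, Q₀₀, P₁₀, Q₁₀, P₀₁, Q₀₁, P₁₁, Q₁₁ be real numbers with P₀₀ ≠ 0. Then there exists d > 0 such that d·P₀₀ + Q₁₀ = 0, −d·Q₀₁ + P₁₁ = 0, and (−d·Q₀₀ + P₁₀)·(d·P₀₁ + Q₁₁) < 0, if and only if the following three conditions hold: P₀₀·P₁₁ + Q₁₀·Q₀₁ = 0; P₁₁·Q₀₁ − P₀₀·Q₁₀ > 0; and (P₁₀·P₀₀ + Q₁₀·Q₀₀)·(P₀₀·Q₁₁ − Q₁₀·P₀₁) < 0. Moreover, in that case the solution d is unique and is given by d = (P₁₁·Q₀₁ − P₀₀·Q₁₀)/(P₀₀² + Q₀₁²). -/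

import Mathlib

theorem stmt12 (P₀₀ Q₀₀ P₁₀ Q₁₀ P₀₁ Q₀₁ P₁₁ Q₁₁ : ℝ) (h : P₀₀ ≠ 0) :
    ((∃ d : ℝ, 0 < d ∧ d * P₀₀ + Q₁₀ = 0 ∧ -d * Q₀₁ + P₁₁ = 0 ∧
        (-d * Q₀₀ + P₁₀) * (d * P₀₁ + Q₁₁) < 0) ↔
      (P₀₀ * P₁₁ + Q₁₀ * Q₀₁ = 0 ∧
        0 < P₁₁ * Q₀₁ - P₀₀ * Q₁₀ ∧
        (P₁₀ * P₀₀ + Q₁₀ * Q₀₀) * (P₀₀ * Q₁₁ - Q₁₀ * P₀₁) < 0)) ∧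
    (∀ d : ℝ, 0 < d → d * P₀₀ + Q₁₀ = 0 → -d * Q₀₁ + P₁₁ = 0 →
        (-d * Q₀₀ + P₁₀) * (d * P₀₁ + Q₁₁) < 0 →
        d = (P₁₁ * Q₀₁ - P₀₀ * Q₁₀) / (P₀₀ ^ 2 + Q₀₁ ^ 2)) := by
  have hp : (0:ℝ) < P₀₀ ^ 2 := by positivity
  have hs : (0:ℝ) < P₀₀ ^ 2 + Q₀₁ ^ 2 := by positivity
  constructor
  · constructor
    · rintro ⟨d, hd, h1, h2, h3⟩
      have hq : Q₁₀ = -d * P₀₀ := by linarith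
      have hpp : P₁₁ = d * Q₀₁ := by linarith
      subst hq hpp
      refine ⟨by ring, ?_, ?_⟩
      · nlinarith [mul_pos hd hs]
      · have key : (P₁₀ * P₀₀ + -d * P₀₀ * Q₀₀) * (P₀₀ * Q₁₁ - -d * P₀₀ * P₀₁)
            = P₀₀ ^ 2 * ((-d * Q₀₀ + P₁₀) * (d * P₀₁ + Q₁₁)) := by ring
        rw [key]
        exact mul_neg_of_pos_of_neg hp h3
    · rintro ⟨e1, e2, e3⟩
      refine ⟨-Q₁₀ / P₀₀, ?_, ?_, ?_, ?_⟩
      · have hd : -Q₁₀ / P₀₀ * (P₀₀ ^ 2 + Q₀₁ ^ 2) = P₁₁ * Q₀₁ - P₀₀ * Q₁₀ := by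
          field_simp
          linear_combination -Q₀₁ * e1
        nlinarith [mul_pos hs hs]
      · field_simp
        ring
      · field_simp
        linear_combination e1
      · have key : (-(-Q₁₀ / P₀₀) * Q₀₀ + P₁₀) * (-Q₁₀ / P₀₀ * P₀₁ + Q₁₁) * P₀₀ ^ 2
            = (P₁₀ * P₀₀ + Q₁₀ * Q₀₀) * (P₀₀ * Q₁₁ - Q₁₀ * P₀₁) := by
          field_simp
          ring
        nlinarith [key]
  · intro d hd h1 h2 h3
    have : d * (P₀₀ ^ 2 + Q₀₁ ^ 2) = P₁₁ * Q₀₁ - P₀₀ * Q₁₀ := by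
      linear_combination P₀₀ * h1 - Q₀₁ * h2
    field_simp
    linarith [this]
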